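/- Let x, y, z : ℕ → ℝ satisfy x 1 = 0, y 1 = 1, z 1 = 1, and for every n ≥ 1: z (n+1) = (z n + 2)/(z n + 3), x (n+1) = (x n - y n + z n + 2)(-x n + y n + z n + 4)/(4(z n + 3)) + (x n + y n - z n)/2, and y (n+1) = (-x n + y n + z n + 2)(x n - y n + z n + 4)/(4(z n + 3)) + (x n + y n - z n)/2. Then for every n ≥ 1, x n + y n - z n = n - 1. -/

import Mathlib

theorem ladder_xyz_sum (x y z : ℕ → ℝ)
    (hx1 : x 1 = 0) (hy1 : y 1 = 1) (hz1 : z 1 = 1)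
    (hzrec : ∀ n : ℕ, 1 ≤ n → z (n + 1) = (z n + 2) / (z n + 3))
    (hxrec : ∀ n : ℕ, 1 ≤ n →
      x (n + 1) = (x n - y n + z n + 2) * (-x n + y n + z n + 4) / (4 * (z n + 3))
          + (x n + y n - z n) / 2)
    (hyrec : ∀ n : ℕ, 1 ≤ n →
      y (n + 1) = (-x n + y n + z n + 2) * (x n - y n + z n + 4) / (4 * (z n + 3))
          + (x n + y n - z n) / 2) :
    ∀ n : ℕ, 1 ≤ n → x n + y n - z n = (n : ℝ) - 1 := by
  have key : ∀ n : ℕ, 1 ≤ n → z n > 0 ∧ (x n - y n)^2 = z n ^ 2 + 2 * z n - 2 ∧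
      x n + y n - z n = (n : ℝ) - 1 := by
    intro n hn
    induction n, hn using Nat.le_induction with
    | base => norm_num [hx1, hy1, hz1]
    | succ n hn ih =>
      obtain ⟨hzpos, hinv, hsum⟩ := ih
      have hz3 : z n + 3 ≠ 0 := by positivity
      have hd : x (n+1) - y (n+1) = (x n - y n) / (z n + 3) := by
        rw [hxrec n hn, hyrec n hn]; field_simp; ring
      have hs : x (n+1) + y (n+1) = (2 * z n + 5) / (z n + 3) + (x n + y n - z n) := by
        rw [hxrec n hn, hyrec n hn]; field_simp
        linear_combination (-4) * hinv
      refine ⟨?_, ?_, ?_⟩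
      · rw [hzrec n hn]; positivity
      · rw [hd, hzrec n hn]
        field_simp
        linear_combination hinv
      · rw [hzrec n hn]
        have : x (n+1) + y (n+1) - (z n + 2)/(z n + 3) = (x n + y n - z n) + 1 := by
          rw [hs]; field_simp; ring
        rw [this, hsum]; push_cast; ring
  exact fun n hn => (key n hn).2.2
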